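/- Let p ≥ 2 be an integer and k an integer not divisible by p. Then ∑_{l=0}^{p−1} l · sin((2l+1)πk/p) = −(p/2) · (1/sin(πk/p)), i.e. equals −(p/2)·cosec(πk/p). -/

import Mathlib

open Finset Real

/-- For an integer `p ≥ 2` and an integer `k` not divisible by `p`,
`∑_{l=0}^{p−1} l · sin((2l+1)πk/p) = −(p/2) · cosec(πk/p)`. -/
theorem sum_mul_sin_odd_eq_neg_half_mul_cosec (p : ℕ) (hp : 2 ≤ p) (k : ℤ)
    (hk : ¬ ((p : ℤ) ∣ k)) :
    ∑ l ∈ Finset.range p, (l : ℝ) * Real.sin ((2 * l + 1) * Real.pi * k / p)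
      = -((p : ℝ) / 2) * (1 / Real.sin (Real.pi * k / p)) := by
  have hp0 : (p : ℝ) ≠ 0 := Nat.cast_ne_zero.mpr (by omega)
  have hπ := Real.pi_ne_zero
  set θ : ℝ := Real.pi * k / p with hθ
  -- sin θ ≠ 0
  have hsin : Real.sin θ ≠ 0 := by
    intro h
    rw [Real.sin_eq_zero_iff] at h
    obtain ⟨n, hn⟩ := h
    apply hk
    refine ⟨n, ?_⟩
    have : (k : ℝ) = (p : ℝ) * n := by
      rw [hθ] at hn
      field_simp at hn
      have h' : Real.pi * (k : ℝ) = Real.pi * ((p : ℝ) * n) := by rw [← hn]; ring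
      exact mul_left_cancel₀ hπ h'
    exact_mod_cast this
  have hp0c : (p : ℂ) ≠ 0 := by exact_mod_cast hp0
  -- complex root of unity
  set z : ℂ := Complex.exp (((2 * Real.pi * k / p : ℝ)) * Complex.I) with hz
  have hzp : z ^ p = 1 := by
    rw [hz, ← Complex.exp_nat_mul]
    rw [show ((p : ℂ) * (((2 * Real.pi * k / p : ℝ)) * Complex.I)) = (k : ℂ) * (2 * Real.pi * Complex.I) by push_cast; field_simp [hp0c]]
    exact Complex.exp_int_mul_two_pi_mul_I k
  have hzne : z ≠ 1 := by
    intro h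
    rw [hz, Complex.exp_eq_one_iff] at h
    obtain ⟨n, hn⟩ := h
    apply hk
    refine ⟨n, ?_⟩
    have him := congrArg Complex.im hn
    simp [Complex.mul_I_im] at him
    have : (k : ℝ) = (p : ℝ) * n := by
      field_simp at him
      have h' : Real.pi * (k : ℝ) = Real.pi * ((p : ℝ) * n) := by rw [him]
      exact mul_left_cancel₀ hπ h'
    exact_mod_cast this
  have hsumz : ∑ m ∈ range p, z ^ m = 0 := by
    rw [geom_sum_eq hzne, hzp]
    simp
  have hre : ∀ m : ℕ, (z ^ m).re = Real.cos (2 * m * θ) := by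
    intro m
    rw [hz, ← Complex.exp_nat_mul,
      show ((m : ℂ) * (((2 * Real.pi * k / p : ℝ)) * Complex.I)) = ((2 * m * θ : ℝ)) * Complex.I by
        rw [hθ]; push_cast; ring]
    exact Complex.exp_ofReal_mul_I_re _
  have hcos : ∑ m ∈ range p, Real.cos (2 * m * θ) = 0 := by
    have := congrArg Complex.re hsumz
    rw [Complex.re_sum] at this
    simpa [hre] using this
  -- cos (2 p θ) = 1
  have hcp : Real.cos (2 * p * θ) = 1 := by
    rw [show 2 * (p : ℝ) * θ = (k : ℝ) * (2 * Real.pi) by rw [hθ]; field_simp]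
    exact Real.cos_int_mul_two_pi k
  -- telescoping
  set S : ℝ := ∑ l ∈ range p, (l : ℝ) * Real.sin ((2 * l + 1) * Real.pi * k / p) with hS
  have hterm : ∀ l : ℕ, 2 * Real.sin θ * ((l : ℝ) * Real.sin ((2 * l + 1) * Real.pi * k / p))
      = (l : ℝ) * (Real.cos (2 * l * θ) - Real.cos (2 * (l + 1) * θ)) := by
    intro l
    rw [Real.cos_sub_cos,
      show (2 * (l : ℝ) * θ + 2 * (l + 1) * θ) / 2 = (2 * l + 1) * θ by ring,
      show (2 * (l : ℝ) * θ - 2 * (l + 1) * θ) / 2 = -θ by ring,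
      Real.sin_neg,
      show ((2 * (l : ℝ) + 1) * Real.pi * k / p) = (2 * l + 1) * θ by rw [hθ]; ring]
    ring
  have key : 2 * Real.sin θ * S = - (p : ℝ) := by
    have h1 : 2 * Real.sin θ * S
        = ∑ l ∈ range p, (l : ℝ) * (Real.cos (2 * l * θ) - Real.cos (2 * (l + 1) * θ)) := by
      rw [hS, Finset.mul_sum]
      exact Finset.sum_congr rfl (fun l _ => hterm l)
    have h2 : ∑ l ∈ range p, ((l : ℝ) + 1) * Real.cos (2 * (l + 1) * θ)
        = (∑ l ∈ range p, (l : ℝ) * Real.cos (2 * l * θ)) + p := by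
      have := Finset.sum_range_succ' (fun l : ℕ => (l : ℝ) * Real.cos (2 * l * θ)) p
      rw [Finset.sum_range_succ] at this
      push_cast at this ⊢
      rw [hcp] at this
      linarith [this]
    have h3 : ∑ l ∈ range p, Real.cos (2 * (l + 1) * θ) = 0 := by
      have := Finset.sum_range_succ' (fun l : ℕ => Real.cos (2 * l * θ)) p
      rw [Finset.sum_range_succ, hcos, hcp] at this
      push_cast at this ⊢
      simp at this
      linarith [this]
    have h4 : ∑ l ∈ range p, (l : ℝ) * Real.cos (2 * (l + 1) * θ)
        = (∑ l ∈ range p, (l : ℝ) * Real.cos (2 * l * θ)) + p := by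
      have : ∑ l ∈ range p, (l : ℝ) * Real.cos (2 * (l + 1) * θ)
          = ∑ l ∈ range p, (((l : ℝ) + 1) * Real.cos (2 * (l + 1) * θ) - Real.cos (2 * (l + 1) * θ)) := by
        exact Finset.sum_congr rfl (fun l _ => by ring)
      rw [this, Finset.sum_sub_distrib, h2, h3]
      ring
    rw [h1]
    calc ∑ l ∈ range p, (l : ℝ) * (Real.cos (2 * l * θ) - Real.cos (2 * (l + 1) * θ))
        = ∑ l ∈ range p, ((l : ℝ) * Real.cos (2 * l * θ) - (l : ℝ) * Real.cos (2 * (l + 1) * θ)) :=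
          Finset.sum_congr rfl (fun l _ => by ring)
      _ = (∑ l ∈ range p, (l : ℝ) * Real.cos (2 * l * θ)) - ∑ l ∈ range p, (l : ℝ) * Real.cos (2 * (l + 1) * θ) :=
          Finset.sum_sub_distrib _ _
      _ = - (p : ℝ) := by rw [h4]; ring
  -- conclude
  rw [show -((p : ℝ) / 2) * (1 / Real.sin θ) = (- (p : ℝ)) / (2 * Real.sin θ) by ring]
  rw [eq_div_iff (mul_ne_zero two_ne_zero hsin)]
  linarith [key]
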